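/- For every integer n ≥ 2 and every i ∈ {0,1,...,n−1}, the Poisson bracket of E_{i,1} with the coordinate function q^1 equals minus the momentum p_{n−i}: {E_{i,1}, q^1} = −p_{n−i} identically on ℝ^{2n}. -/

import Mathlib

open Matrix

noncomputable section

/-- Phase space ℝ^{2n}: pairs (q, p). -/
abbrev Phase (n : ℕ) := (Fin n → ℝ) × (Fin n → ℝ)

/-- Extended coordinates: `qext n q m` is `q^m` (1-based), with `q^0 := 1`
and `q^m := 0` for `m < 0` or `m > n`. -/
def qext (n : ℕ) (q : Fin n → ℝ) (m : ℤ) : ℝ :=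
  if h : 1 ≤ m ∧ m ≤ (n : ℤ) then q ⟨m.toNat - 1, by omega⟩
  else if m = 0 then 1 else 0

/-- The matrix `L(q)`: first column `-q^j`, superdiagonal `1`, all other entries `0`. -/
def Lmat (n : ℕ) (q : Fin n → ℝ) : Matrix (Fin n) (Fin n) ℝ :=
  Matrix.of fun j k => if (k : ℕ) = 0 then -q j else if (k : ℕ) = (j : ℕ) + 1 then 1 else 0

/-- The contravariant metric `G(q)` with entries `G^{jk} = q^{j+k-n-1}` (1-based indices). -/
def Gmat (n : ℕ) (q : Fin n → ℝ) : Matrix (Fin n) (Fin n) ℝ :=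
  Matrix.of fun j k => qext n q ((j : ℤ) + (k : ℤ) + 1 - (n : ℤ))

/-- The Killing tensors: `K_r = Σ_{k=0}^{r-1} q^k L^{r-1-k}` (so `K_1 = I`). -/
def Kmat (n : ℕ) (q : Fin n → ℝ) (r : ℕ) : Matrix (Fin n) (Fin n) ℝ :=
  ∑ k ∈ Finset.range r, qext n q (k : ℤ) • (Lmat n q) ^ (r - 1 - k)

/-- `E_{i,r}(q,p) = (1/2) Σ_{l,m} (K_r L^i G)^{lm} p_l p_m`. -/
def Efun (n i r : ℕ) : Phase n → ℝ := fun x =>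
  (1 / 2) * ∑ l : Fin n, ∑ m : Fin n,
    (Kmat n x.1 r * (Lmat n x.1) ^ i * Gmat n x.1) l m * x.2 l * x.2 m

/-- Canonical Poisson bracket on `ℝ^{2n}`. -/
def pb (n : ℕ) (f g : Phase n → ℝ) : Phase n → ℝ := fun x =>
  ∑ i : Fin n,
    (fderiv ℝ f x (Pi.single i 1, 0) * fderiv ℝ g x (0, Pi.single i 1)
      - fderiv ℝ f x (0, Pi.single i 1) * fderiv ℝ g x (Pi.single i 1, 0))

section Aux
variable {n : ℕ} (q : Fin n → ℝ)

lemma qext_fin (k : Fin n) : qext n q ((k : ℤ) + 1) = q k := by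
  unfold qext
  rw [dif_pos ⟨by omega, by omega⟩]
  refine congrArg q (Fin.ext ?_)
  simp only [Fin.val_mk]
  omega

lemma qext_nonpos {m : ℤ} (hm : m ≤ 0) : qext n q m = if m = 0 then 1 else 0 := by
  unfold qext
  rw [dif_neg (by omega)]

lemma Gmat_symm : (Gmat n q)ᵀ = Gmat n q := by
  ext j k
  simp only [Matrix.transpose_apply, Gmat, Matrix.of_apply]
  congr 1
  ring

lemma LG_entry (j k : Fin n) : (Lmat n q * Gmat n q) j k =
    qext n q ((j : ℤ) + (k : ℤ) + 2 - (n : ℤ))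
      - (if (k : ℕ) = n - 1 then q j else 0)
      - (if (j : ℕ) = n - 1 then q k else 0) := by
  have hn : 0 < n := j.pos
  rw [Matrix.mul_apply]
  have hsum : ∀ l : Fin n, Lmat n q j l * Gmat n q l k =
      (if l = (⟨0, hn⟩ : Fin n) then -q j * Gmat n q ⟨0, hn⟩ k else 0)
      + (if (l : ℕ) = (j : ℕ) + 1 then Gmat n q l k else 0) := by
    intro l
    simp only [Lmat, Matrix.of_apply]
    rcases eq_or_ne (l : ℕ) 0 with h0 | h0
    · have : l = (⟨0, hn⟩ : Fin n) := Fin.ext h0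
      simp [this, h0]
    · have : l ≠ (⟨0, hn⟩ : Fin n) := by
        intro h; exact h0 (by simpa using congrArg Fin.val h)
      rcases eq_or_ne (l : ℕ) ((j : ℕ) + 1) with h1 | h1
      · simp [h0, h1, this]
      · simp [h0, h1, this]
  rw [Finset.sum_congr rfl (fun l _ => hsum l), Finset.sum_add_distrib,
    Finset.sum_ite_eq' Finset.univ (⟨0, hn⟩ : Fin n)]
  simp only [Finset.mem_univ, if_true]
  have hG0 : Gmat n q ⟨0, hn⟩ k = if (k : ℕ) = n - 1 then 1 else 0 := by
    simp only [Gmat, Matrix.of_apply]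
    rw [qext_nonpos q (by simp)]
    have hk : (k : ℕ) < n := k.isLt
    split_ifs <;> first | rfl | omega
  rcases Nat.lt_or_ge ((j : ℕ) + 1) n with hj | hj
  · -- j+1 < n : second sum picks l = ⟨j+1, hj⟩
    have hconv : ∀ l : Fin n, (if (l : ℕ) = (j : ℕ) + 1 then Gmat n q l k else 0)
        = (if l = (⟨(j : ℕ) + 1, hj⟩ : Fin n) then Gmat n q l k else 0) := by
      intro l
      congr 1
      simp [Fin.ext_iff]
    rw [Finset.sum_congr rfl (fun l _ => hconv l),
      Finset.sum_ite_eq' Finset.univ (⟨(j : ℕ) + 1, hj⟩ : Fin n)]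
    have hjne : (j : ℕ) ≠ n - 1 := by omega
    have hGj : Gmat n q ⟨(j : ℕ) + 1, hj⟩ k = qext n q ((j : ℤ) + (k : ℤ) + 2 - (n : ℤ)) := by
      simp only [Gmat, Matrix.of_apply]
      congr 1
      push_cast
      ring
    simp [hG0, hGj, hjne]
    split_ifs <;> ring
  · -- j = n-1 : second sum is empty
    have hje : (j : ℕ) = n - 1 := by have := j.isLt; omega
    have hzero : ∀ l : Fin n, (if (l : ℕ) = (j : ℕ) + 1 then Gmat n q l k else 0) = 0 := by
      intro l
      rw [if_neg]
      have := l.isLt; omega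
    rw [Finset.sum_congr rfl (fun l _ => hzero l), Finset.sum_const_zero]
    have hq : qext n q ((j : ℤ) + (k : ℤ) + 2 - (n : ℤ)) = q k := by
      rw [show ((j : ℤ) + (k : ℤ) + 2 - (n : ℤ)) = (k : ℤ) + 1 by omega]
      exact qext_fin q k
    rw [hG0, hq, if_pos hje]
    split_ifs <;> ring

lemma LG_symm : (Lmat n q * Gmat n q)ᵀ = Lmat n q * Gmat n q := by
  ext j k
  rw [Matrix.transpose_apply, LG_entry, LG_entry,
    show ((k : ℤ) + (j : ℤ) + 2 - (n : ℤ)) = ((j : ℤ) + (k : ℤ) + 2 - (n : ℤ)) by ring]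
  ring

lemma LiG_eq (i : ℕ) : Lmat n q ^ i * Gmat n q = Gmat n q * ((Lmat n q)ᵀ) ^ i := by
  induction i with
  | zero => simp
  | succ i ih =>
    have hLG : Lmat n q * Gmat n q = Gmat n q * (Lmat n q)ᵀ := by
      conv_lhs => rw [← LG_symm q]
      rw [Matrix.transpose_mul, Gmat_symm]
    rw [pow_succ', mul_assoc, ih, ← mul_assoc, hLG, mul_assoc, ← pow_succ']

lemma LiG_symm (i : ℕ) : (Lmat n q ^ i * Gmat n q)ᵀ = Lmat n q ^ i * Gmat n q := by
  rw [LiG_eq, Matrix.transpose_mul, Gmat_symm, Matrix.transpose_pow, Matrix.transpose_transpose,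
    ← LiG_eq]

lemma LiG_col (hn : 0 < n) (i : ℕ) (hi : i < n) (m : Fin n) :
    (Lmat n q ^ i * Gmat n q) m ⟨0, hn⟩ = if (m : ℕ) = n - 1 - i then 1 else 0 := by
  induction i generalizing m with
  | zero =>
    simp only [pow_zero, one_mul, Gmat, Matrix.of_apply]
    rw [qext_nonpos q (by simp)]
    have := m.isLt
    split_ifs <;> first | rfl | omega
  | succ i ih =>
    have hi' : i < n := by omega
    rw [pow_succ', mul_assoc, Matrix.mul_apply]
    have ha : n - 1 - i < n := by omega
    have hconv : ∀ l : Fin n,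
        Lmat n q m l * (Lmat n q ^ i * Gmat n q) l ⟨0, hn⟩
        = (if l = (⟨n - 1 - i, ha⟩ : Fin n) then Lmat n q m l else 0) := by
      intro l
      rw [ih hi']
      rcases eq_or_ne (l : ℕ) (n - 1 - i) with h | h
      · rw [if_pos h, if_pos (Fin.ext h), mul_one]
      · rw [if_neg h, if_neg (fun hh => h (by simpa using congrArg Fin.val hh)), mul_zero]
    rw [Finset.sum_congr rfl (fun l _ => hconv l),
      Finset.sum_ite_eq' Finset.univ (⟨n - 1 - i, ha⟩ : Fin n)]
    simp only [Finset.mem_univ, if_true, Lmat, Matrix.of_apply]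
    have := m.isLt
    split_ifs <;> first | rfl | omega

lemma LiG_row (hn : 0 < n) (i : ℕ) (hi : i < n) (m : Fin n) :
    (Lmat n q ^ i * Gmat n q) ⟨0, hn⟩ m = if (m : ℕ) = n - 1 - i then 1 else 0 := by
  rw [← LiG_symm, Matrix.transpose_apply, LiG_col q hn i hi m]

end Aux

section Aux2
variable {n : ℕ}

lemma Kmat_one (q : Fin n → ℝ) : Kmat n q 1 = 1 := by
  unfold Kmat
  rw [Finset.sum_range_one]
  norm_num
  rw [qext_nonpos q le_rfl]
  simp

lemma Efun_one (n i : ℕ) : Efun n i 1 = fun x =>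
    (1 / 2) * ∑ l : Fin n, ∑ m : Fin n,
      (Lmat n x.1 ^ i * Gmat n x.1) l m * x.2 l * x.2 m := by
  funext x
  simp [Efun, Kmat_one, one_mul]

lemma diff_qext (m : ℤ) : Differentiable ℝ (fun q : Fin n → ℝ => qext n q m) := by
  unfold qext
  split_ifs with h
  · exact (ContinuousLinearMap.proj _ : (Fin n → ℝ) →L[ℝ] ℝ).differentiable
  · exact differentiable_const _
  · exact differentiable_const _

lemma diff_L (j k : Fin n) : Differentiable ℝ (fun q : Fin n → ℝ => Lmat n q j k) := by
  simp only [Lmat, Matrix.of_apply]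
  split_ifs with h
  · exact (ContinuousLinearMap.proj j : (Fin n → ℝ) →L[ℝ] ℝ).differentiable.neg
  · exact differentiable_const _
  · exact differentiable_const _

lemma diff_G (j k : Fin n) : Differentiable ℝ (fun q : Fin n → ℝ => Gmat n q j k) :=
  diff_qext _

lemma diff_mul_entry {M N : (Fin n → ℝ) → Matrix (Fin n) (Fin n) ℝ}
    (hM : ∀ j k, Differentiable ℝ (fun q => M q j k))
    (hN : ∀ j k, Differentiable ℝ (fun q => N q j k)) (j k : Fin n) :
    Differentiable ℝ (fun q => (M q * N q) j k) := by
  simp only [Matrix.mul_apply]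
  exact Differentiable.fun_sum fun l _ => (hM j l).mul (hN l k)

lemma diff_pow (i : ℕ) (j k : Fin n) :
    Differentiable ℝ (fun q : Fin n → ℝ => (Lmat n q ^ i) j k) := by
  induction i generalizing j k with
  | zero => simp only [pow_zero]; exact differentiable_const _
  | succ i ih =>
    simp only [pow_succ]
    exact diff_mul_entry ih diff_L j k

lemma diff_A (i : ℕ) (j k : Fin n) :
    Differentiable ℝ (fun q : Fin n → ℝ => (Lmat n q ^ i * Gmat n q) j k) :=
  diff_mul_entry (diff_pow i) diff_G j k

lemma diff_E (i : ℕ) : Differentiable ℝ (Efun n i 1) := by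
  rw [Efun_one]
  apply Differentiable.const_mul
  apply Differentiable.fun_sum
  intro l _
  apply Differentiable.fun_sum
  intro m _
  exact (((diff_A i l m).comp differentiable_fst).mul
    ((ContinuousLinearMap.proj l : (Fin n → ℝ) →L[ℝ] ℝ).differentiable.comp
      differentiable_snd)).mul
    ((ContinuousLinearMap.proj m : (Fin n → ℝ) →L[ℝ] ℝ).differentiable.comp
      differentiable_snd)

/-- directional derivative in a momentum direction -/
lemma fderiv_E_p (i : ℕ) (x : Phase n) (v : Fin n → ℝ) :
    fderiv ℝ (Efun n i 1) x (0, v) =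
      (1 / 2) * ∑ l : Fin n, ∑ m : Fin n,
        ((Lmat n x.1 ^ i * Gmat n x.1) l m * v l * x.2 m
          + (Lmat n x.1 ^ i * Gmat n x.1) l m * x.2 l * v m) := by
  have hpath : HasDerivAt (fun t : ℝ => ((x.1, x.2 + t • v) : Phase n)) (0, v) 0 := by
    have h2 : HasDerivAt (fun t : ℝ => x.2 + t • v) v 0 := by
      simpa using (((hasDerivAt_id (0:ℝ)).smul_const v).const_add x.2)
    simpa using (hasDerivAt_const (0:ℝ) x.1).prodMk h2
  have hx : ((x.1, x.2 + (0:ℝ) • v) : Phase n) = x := by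
    ext <;> simp
  have hcomp : HasDerivAt (fun t : ℝ => Efun n i 1 (x.1, x.2 + t • v))
      (fderiv ℝ (Efun n i 1) x (0, v)) 0 := by
    have hf : HasFDerivAt (Efun n i 1) (fderiv ℝ (Efun n i 1) x) (x.1, x.2 + (0:ℝ) • v) := by
      rw [hx]; exact ((diff_E i) x).hasFDerivAt
    exact hf.comp_hasDerivAt 0 hpath
  set A := Lmat n x.1 ^ i * Gmat n x.1 with hA
  have hline : HasDerivAt (fun t : ℝ => Efun n i 1 (x.1, x.2 + t • v))
      ((1 / 2) * ∑ l : Fin n, ∑ m : Fin n,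
        (A l m * v l * (x.2 m + 0 * v m) + A l m * (x.2 l + 0 * v l) * v m)) 0 := by
    rw [Efun_one]
    have key : HasDerivAt (fun t : ℝ => (1 / 2 : ℝ) * ∑ l : Fin n, ∑ m : Fin n,
        A l m * (x.2 l + t * v l) * (x.2 m + t * v m))
        ((1 / 2) * ∑ l : Fin n, ∑ m : Fin n,
          (A l m * v l * (x.2 m + 0 * v m) + A l m * (x.2 l + 0 * v l) * v m)) 0 := by
      apply HasDerivAt.const_mul
      apply HasDerivAt.fun_sum
      intro l _
      apply HasDerivAt.fun_sum
      intro m _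
      have h1 : ∀ l' : Fin n, HasDerivAt (fun t : ℝ => x.2 l' + t * v l') (v l') 0 := by
        intro l'
        simpa using ((hasDerivAt_id (0:ℝ)).mul_const (v l')).const_add (x.2 l')
      exact ((h1 l).const_mul (A l m)).mul (h1 m)
    exact key
  rw [← hline.unique hcomp]
  congr 1
  refine Finset.sum_congr rfl fun l _ => Finset.sum_congr rfl fun m _ => ?_
  ring


/-- for `i ∈ {0,…,n−1}`, `{E_{i,1}, q^1} = −p_{n−i}` identically on
`ℝ^{2n}`. -/
theorem Efun_pb_q1 (n : ℕ) (hn : 2 ≤ n) (i : ℕ) (hi : i < n) (x : Phase n) :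
    pb n (Efun n i 1) (fun y => y.1 ⟨0, by omega⟩) x = -x.2 ⟨n - i - 1, by omega⟩ := by
  have hn0 : 0 < n := by omega
  have ha : n - 1 - i < n := by omega
  have hrow : ∀ m : Fin n, (Lmat n x.1 ^ i * Gmat n x.1) ⟨0, hn0⟩ m
      = if m = (⟨n - 1 - i, ha⟩ : Fin n) then 1 else 0 := by
    intro m
    rw [LiG_row x.1 hn0 i hi m]
    simp [Fin.ext_iff]
  have hcol : ∀ l : Fin n, (Lmat n x.1 ^ i * Gmat n x.1) l ⟨0, hn0⟩
      = if l = (⟨n - 1 - i, ha⟩ : Fin n) then 1 else 0 := by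
    intro l
    rw [LiG_col x.1 hn0 i hi l]
    simp [Fin.ext_iff]
  have hg : fderiv ℝ (fun y : Phase n => y.1 ⟨0, hn0⟩) x
      = (ContinuousLinearMap.proj (⟨0, hn0⟩ : Fin n)).comp
          (ContinuousLinearMap.fst ℝ (Fin n → ℝ) (Fin n → ℝ)) :=
    ((ContinuousLinearMap.proj (⟨0, hn0⟩ : Fin n)).comp
      (ContinuousLinearMap.fst ℝ (Fin n → ℝ) (Fin n → ℝ))).hasFDerivAt.fderiv
  show (∑ j : Fin n,
      (fderiv ℝ (Efun n i 1) x (Pi.single j 1, 0)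
          * fderiv ℝ (fun y : Phase n => y.1 ⟨0, hn0⟩) x (0, Pi.single j 1)
        - fderiv ℝ (Efun n i 1) x (0, Pi.single j 1)
          * fderiv ℝ (fun y : Phase n => y.1 ⟨0, hn0⟩) x (Pi.single j 1, 0)))
      = -x.2 ⟨n - i - 1, by omega⟩
  rw [hg]
  have hsum : ∀ j : Fin n,
      fderiv ℝ (Efun n i 1) x (Pi.single j 1, 0)
          * ((ContinuousLinearMap.proj (⟨0, hn0⟩ : Fin n)).comp
              (ContinuousLinearMap.fst ℝ (Fin n → ℝ) (Fin n → ℝ))) (0, Pi.single j 1)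
        - fderiv ℝ (Efun n i 1) x (0, Pi.single j 1)
          * ((ContinuousLinearMap.proj (⟨0, hn0⟩ : Fin n)).comp
              (ContinuousLinearMap.fst ℝ (Fin n → ℝ) (Fin n → ℝ))) (Pi.single j 1, 0)
      = -(if (⟨0, hn0⟩ : Fin n) = j then fderiv ℝ (Efun n i 1) x (0, Pi.single j 1) else 0) := by
    intro j
    simp [Pi.single_apply, mul_ite]
  rw [Finset.sum_congr rfl (fun j _ => hsum j)]
  rw [Finset.sum_neg_distrib, Finset.sum_ite_eq Finset.univ]
  simp only [Finset.mem_univ, if_true]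
  rw [fderiv_E_p i x (Pi.single (⟨0, hn0⟩ : Fin n) (1:ℝ))]
  have hS : ∑ l : Fin n, ∑ m : Fin n,
      ((Lmat n x.1 ^ i * Gmat n x.1) l m * (Pi.single (⟨0, hn0⟩ : Fin n) (1:ℝ) : Fin n → ℝ) l * x.2 m
        + (Lmat n x.1 ^ i * Gmat n x.1) l m * x.2 l * (Pi.single (⟨0, hn0⟩ : Fin n) (1:ℝ) : Fin n → ℝ) m)
      = x.2 ⟨n - 1 - i, ha⟩ + x.2 ⟨n - 1 - i, ha⟩ := by
    rw [Finset.sum_congr rfl (fun l (_ : l ∈ Finset.univ) => Finset.sum_add_distrib),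
      Finset.sum_add_distrib]
    congr 1
    · have h1 : ∀ l : Fin n,
          ∑ m : Fin n, (Lmat n x.1 ^ i * Gmat n x.1) l m
              * (Pi.single (⟨0, hn0⟩ : Fin n) (1:ℝ) : Fin n → ℝ) l * x.2 m
          = if l = (⟨0, hn0⟩ : Fin n) then x.2 ⟨n - 1 - i, ha⟩ else 0 := by
        intro l
        rcases eq_or_ne l (⟨0, hn0⟩ : Fin n) with hl | hl
        · rw [if_pos hl, hl]
          simp only [Pi.single_eq_same, mul_one]
          rw [Finset.sum_congr rfl (fun m (_ : m ∈ Finset.univ) => by rw [hrow m])]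
          simp [ite_mul, Finset.sum_ite_eq']
        · rw [if_neg hl]
          simp [Pi.single_apply, hl]
      rw [Finset.sum_congr rfl (fun l _ => h1 l), Finset.sum_ite_eq' Finset.univ]
      simp
    · have h2 : ∀ l : Fin n,
          ∑ m : Fin n, (Lmat n x.1 ^ i * Gmat n x.1) l m * x.2 l
              * (Pi.single (⟨0, hn0⟩ : Fin n) (1:ℝ) : Fin n → ℝ) m
          = (if l = (⟨n - 1 - i, ha⟩ : Fin n) then 1 else 0) * x.2 l := by
        intro l
        rw [← hcol l]
        simp [Pi.single_apply, mul_ite, Finset.sum_ite_eq']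
      rw [Finset.sum_congr rfl (fun l _ => h2 l)]
      simp [ite_mul, Finset.sum_ite_eq']
  rw [hS]
  have hval : x.2 ⟨n - 1 - i, ha⟩ = x.2 ⟨n - i - 1, by omega⟩ :=
    congrArg x.2 (Fin.ext (by simp only [Fin.val_mk]; omega))
  rw [hval]
  ring
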